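/- arXiv:2203.14460 — 2 statements merged into one kernel-verified Lean document; each statement's English description precedes it below -/
import Mathlib

section
/- Let $n \geq 1$ and let $r_1 \in S_{2n+2}$ be the cycle $(1\ 2\ 3\ \cdots\ 2n+2)$. Then the group $W_{2n+2}$ is generated by the transpositions $(i\ i+2)$ for $1 \leq i \leq 2n$ together with $r_1$. -/
/-- Indices `0,…,2n+1` of `Fin (2n+2)` correspond to the numbers `1,…,2n+2`;
`Bo` is the set corresponding to the odd numbers `1,3,…,2n+1`. -/
def Bo (n : ℕ) : Set (Fin (2*n+2)) := {x | (x : ℕ) % 2 = 0}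

/-- `Be` is the set corresponding to the even numbers `2,4,…,2n+2`. -/
def Be (n : ℕ) : Set (Fin (2*n+2)) := {x | (x : ℕ) % 2 = 1}

theorem stmt7 (n : ℕ) (hn : 1 ≤ n)
    (W : Subgroup (Equiv.Perm (Fin (2*n+2))))
    (hW : ∀ σ, σ ∈ W ↔ (⇑σ '' Bo n = Bo n ∨ ⇑σ '' Bo n = Be n)) :
    W = Subgroup.closure
      ({τ | ∃ j : ℕ, ∃ h : j < 2*n,
          τ = Equiv.swap (⟨j, by omega⟩ : Fin (2*n+2)) ⟨j+2, by omega⟩}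
        ∪ {finRotate (2*n+2)}) := by
  set S : Set (Equiv.Perm (Fin (2*n+2))) :=
    ({τ | ∃ j : ℕ, ∃ h : j < 2*n,
        τ = Equiv.swap (⟨j, by omega⟩ : Fin (2*n+2)) ⟨j+2, by omega⟩}
      ∪ {finRotate (2*n+2)}) with hS
  -- pointwise parity preserving implies image of Bo is Bo
  have himg_pres : ∀ σ : Equiv.Perm (Fin (2*n+2)),
      (∀ x, (σ x : ℕ) % 2 = (x:ℕ) % 2) → ⇑σ '' Bo n = Bo n := by
    intro σ h
    ext y
    constructor
    · rintro ⟨x, hx, rfl⟩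
      simpa [Bo, h x] using hx
    · intro hy
      refine ⟨σ⁻¹ y, ?_, by simp⟩
      have h2 := h (σ⁻¹ y)
      rw [show σ (σ⁻¹ y) = y from Equiv.apply_symm_apply σ y] at h2
      simp only [Bo, Set.mem_setOf_eq] at hy ⊢
      omega
  -- pointwise parity flipping implies image of Bo is Be
  have himg_flip : ∀ σ : Equiv.Perm (Fin (2*n+2)),
      (∀ x, (σ x : ℕ) % 2 ≠ (x:ℕ) % 2) → ⇑σ '' Bo n = Be n := by
    intro σ h
    ext y
    constructor
    · rintro ⟨x, hx, rfl⟩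
      have := h x
      simp only [Bo, Set.mem_setOf_eq] at hx
      simp only [Be, Set.mem_setOf_eq]
      omega
    · intro hy
      refine ⟨σ⁻¹ y, ?_, by simp⟩
      have h2 := h (σ⁻¹ y)
      rw [show σ (σ⁻¹ y) = y from Equiv.apply_symm_apply σ y] at h2
      simp only [Be, Set.mem_setOf_eq] at hy
      simp only [Bo, Set.mem_setOf_eq]
      omega
  -- image of Bo is Bo implies pointwise parity preserving
  have hpt_pres : ∀ σ : Equiv.Perm (Fin (2*n+2)), ⇑σ '' Bo n = Bo n →
      ∀ x, (σ x : ℕ) % 2 = (x:ℕ) % 2 := by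
    intro σ hσ x
    rcases Nat.mod_two_eq_zero_or_one (x : ℕ) with h0 | h1
    · have : σ x ∈ Bo n := hσ ▸ ⟨x, h0, rfl⟩
      simp only [Bo, Set.mem_setOf_eq] at this
      omega
    · rcases Nat.mod_two_eq_zero_or_one ((σ x : ℕ)) with g0 | g1
      · exfalso
        have : σ x ∈ ⇑σ '' Bo n := by rw [hσ]; exact g0
        obtain ⟨y, hy, hyx⟩ := this
        have : y = x := σ.injective hyx
        subst this
        simp only [Bo, Set.mem_setOf_eq] at hy
        omega
      · omega
  -- image of Bo is Be implies pointwise parity flipping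
  have hpt_flip : ∀ σ : Equiv.Perm (Fin (2*n+2)), ⇑σ '' Bo n = Be n →
      ∀ x, (σ x : ℕ) % 2 ≠ (x:ℕ) % 2 := by
    intro σ hσ x
    rcases Nat.mod_two_eq_zero_or_one (x : ℕ) with h0 | h1
    · have : σ x ∈ Be n := hσ ▸ ⟨x, h0, rfl⟩
      simp only [Be, Set.mem_setOf_eq] at this
      omega
    · rcases Nat.mod_two_eq_zero_or_one ((σ x : ℕ)) with g0 | g1
      · omega
      · exfalso
        have : σ x ∈ ⇑σ '' Bo n := by rw [hσ]; exact g1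
        obtain ⟨y, hy, hyx⟩ := this
        have : y = x := σ.injective hyx
        subst this
        simp only [Bo, Set.mem_setOf_eq] at hy
        omega
  -- finRotate flips parity
  have hrot : ∀ x : Fin (2*n+2), ((finRotate (2*n+2) x : ℕ)) % 2 ≠ (x:ℕ) % 2 := by
    intro x
    have h1 : finRotate (2*n+2) x = x + 1 := finRotate_succ_apply (n := 2*n+1) x
    have h2 : ((x + 1 : Fin (2*n+2)) : ℕ) = ((x:ℕ) + 1) % (2*n+2) := by
      rw [Fin.val_add, Fin.val_one]
    rw [h1, h2, Nat.mod_mod_of_dvd _ (by omega : (2:ℕ) ∣ 2*n+2)]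
    omega
  -- swaps of same-parity elements preserve parity pointwise
  have hswap_par : ∀ a b : Fin (2*n+2), (a:ℕ) % 2 = (b:ℕ) % 2 →
      ∀ x, ((Equiv.swap a b x : ℕ)) % 2 = (x:ℕ) % 2 := by
    intro a b hab x
    rcases eq_or_ne x a with rfl | hxa
    · rw [Equiv.swap_apply_left]; omega
    rcases eq_or_ne x b with rfl | hxb
    · rw [Equiv.swap_apply_right]; omega
    · rw [Equiv.swap_apply_of_ne_of_ne hxa hxb]
  -- swaps of elements at even distance are in the closure
  have swap_dist : ∀ k : ℕ, ∀ a b : Fin (2*n+2), (b:ℕ) = (a:ℕ) + 2*(k+1) →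
      Equiv.swap a b ∈ Subgroup.closure S := by
    intro k
    induction k with
    | zero =>
      intro a b hab
      apply Subgroup.subset_closure
      left
      have hb := b.isLt
      refine ⟨(a:ℕ), by omega, ?_⟩
      congr 1
      exact Fin.ext (show (b:ℕ) = (a:ℕ)+2 by omega)
    | succ k ih =>
      intro a b hab
      have hb := b.isLt
      have hc : (a:ℕ) + 2 < 2*n+2 := by omega
      set c : Fin (2*n+2) := ⟨(a:ℕ)+2, hc⟩ with hcdef
      have h1 : Equiv.swap a c ∈ Subgroup.closure S := by
        apply Subgroup.subset_closure
        left
        exact ⟨(a:ℕ), by omega, rfl⟩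
      have h2 : Equiv.swap c b ∈ Subgroup.closure S := ih c b (by show (b:ℕ) = ((a:ℕ)+2) + 2*(k+1); omega)
      have hcval : (c:ℕ) = (a:ℕ)+2 := rfl
      have hbc : b ≠ c := by
        intro h; rw [h] at hab; omega
      have hba : b ≠ a := by
        intro h; rw [h] at hab; omega
      have key : Equiv.swap c a * Equiv.swap b c * Equiv.swap c a = Equiv.swap a b :=
        Equiv.swap_mul_swap_mul_swap hbc hba
      rw [Equiv.swap_comm c a, Equiv.swap_comm b c] at key
      rw [← key]
      exact mul_mem (mul_mem h1 h2) h1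
  -- any same-parity swap is in the closure
  have swap_mem : ∀ a b : Fin (2*n+2), a ≠ b → (a:ℕ) % 2 = (b:ℕ) % 2 →
      Equiv.swap a b ∈ Subgroup.closure S := by
    intro a b hne hpar
    rcases lt_or_gt_of_ne (fun h : (a:ℕ) = (b:ℕ) => hne (Fin.ext h)) with h | h
    · obtain ⟨k, hk⟩ : ∃ k, (b:ℕ) = (a:ℕ) + 2*(k+1) := by
        refine ⟨((b:ℕ) - (a:ℕ))/2 - 1, by omega⟩
      exact swap_dist _ a b hk
    · obtain ⟨k, hk⟩ : ∃ k, (a:ℕ) = (b:ℕ) + 2*(k+1) := by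
        refine ⟨((a:ℕ) - (b:ℕ))/2 - 1, by omega⟩
      rw [Equiv.swap_comm]
      exact swap_dist _ b a hk
  -- main induction: parity-preserving permutations lie in the closure
  have key : ∀ m : ℕ, ∀ σ : Equiv.Perm (Fin (2*n+2)), σ.support.card ≤ m →
      (∀ x, (σ x : ℕ) % 2 = (x:ℕ) % 2) → σ ∈ Subgroup.closure S := by
    intro m
    induction m with
    | zero =>
      intro σ hcard _
      have : σ.support = ∅ := Finset.card_eq_zero.mp (Nat.le_zero.mp hcard)
      rw [Equiv.Perm.support_eq_empty_iff] at this
      rw [this]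
      exact one_mem _
    | succ m ih =>
      intro σ hcard hpar
      by_cases h1 : σ = 1
      · rw [h1]; exact one_mem _
      · obtain ⟨a, ha⟩ : ∃ a, σ a ≠ a := by
          by_contra h
          push_neg at h
          exact h1 (Equiv.ext h)
        have hsw : Equiv.swap a (σ a) ∈ Subgroup.closure S :=
          swap_mem a (σ a) (Ne.symm ha) (hpar a).symm
        have hlt := Equiv.Perm.card_support_swap_mul (f := σ) (x := a) ha
        have hmem : Equiv.swap a (σ a) * σ ∈ Subgroup.closure S := by
          apply ih
          · omega
          · intro x
            simp only [Equiv.Perm.mul_apply]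
            rw [hswap_par a (σ a) (hpar a).symm (σ x)]
            exact hpar x
        have : σ = (Equiv.swap a (σ a))⁻¹ * (Equiv.swap a (σ a) * σ) := by group
        rw [this]
        exact mul_mem (inv_mem hsw) hmem
  apply le_antisymm
  · -- W ≤ closure S
    intro σ hσ
    rw [hW] at hσ
    rcases hσ with h | h
    · exact key _ σ le_rfl (hpt_pres σ h)
    · have hρ : finRotate (2*n+2) ∈ Subgroup.closure S :=
        Subgroup.subset_closure (Or.inr rfl)
      set ρ := finRotate (2*n+2) with hρdef
      have hflipσ := hpt_flip σ h
      have hflipρinv : ∀ z : Fin (2*n+2), ((ρ⁻¹ z : ℕ)) % 2 ≠ (z:ℕ) % 2 := by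
        intro z
        have := hrot (ρ⁻¹ z)
        rw [show ρ (ρ⁻¹ z) = z from Equiv.apply_symm_apply ρ z] at this
        omega
      have hmem : ρ⁻¹ * σ ∈ Subgroup.closure S := by
        apply key _ _ le_rfl
        intro x
        simp only [Equiv.Perm.mul_apply]
        have h1 := hflipρinv (σ x)
        have h2 := hflipσ x
        have m1 := Nat.mod_two_eq_zero_or_one ((ρ⁻¹ (σ x) : ℕ))
        have m2 := Nat.mod_two_eq_zero_or_one ((σ x : ℕ))
        have m3 := Nat.mod_two_eq_zero_or_one ((x : ℕ))
        omega
      have : σ = ρ * (ρ⁻¹ * σ) := by group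
      rw [this]
      exact mul_mem hρ hmem
  · -- closure S ≤ W
    rw [Subgroup.closure_le]
    rintro τ (⟨j, hj, rfl⟩ | hτ)
    · rw [SetLike.mem_coe, hW]
      left
      apply himg_pres
      apply hswap_par
      show j % 2 = (j+2) % 2
      omega
    · rw [Set.mem_singleton_iff] at hτ
      subst hτ
      rw [SetLike.mem_coe, hW]
      right
      exact himg_flip _ hrot
end

section
/- For $n \geq 1$, the group $W_{2n+2}$ is generated by two elements: the transposition $(1\ 3)$ and the $(2n+2)$-cycle $r_1 = (1\ 2\ 3\ \cdots\ 2n+2)$. -/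
private lemma p0 (n : ℕ) : 0 < 2*n+2 := Nat.succ_pos _

private lemma p2 (n : ℕ) (hn : 1 ≤ n) : 2 < 2*n+2 := by omega

private abbrev s9 (n : ℕ) (hn : 1 ≤ n) : Equiv.Perm (Fin (2*n+2)) :=
  Equiv.swap ⟨0, p0 n⟩ ⟨2, p2 n hn⟩

private abbrev G9 (n : ℕ) (hn : 1 ≤ n) : Subgroup (Equiv.Perm (Fin (2*n+2))) :=
  Subgroup.closure {s9 n hn, finRotate (2*n+2)}

open Fin.NatCast in
private lemma rot_pow (n k : ℕ) (x : Fin (2*n+2)) :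
    ((finRotate (2*n+2))^k) x = x + k := by
  induction k with
  | zero => simp
  | succ m ih => rw [pow_succ', Equiv.Perm.mul_apply, ih, finRotate_succ_apply]; push_cast; rw [add_assoc]

private lemma rot_parity (n : ℕ) (x : Fin (2*n+2)) :
    ((finRotate (2*n+2)) x : ℕ) % 2 ≠ (x : ℕ) % 2 := by
  rw [finRotate_succ_apply]
  rcases Nat.lt_or_ge ((x:ℕ)+1) (2*n+2) with h | h
  · have : ((x+1 : Fin (2*n+2)) : ℕ) = (x:ℕ)+1 := by
      simp [Fin.add_def, Nat.mod_eq_of_lt h]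
    omega
  · have hx : (x:ℕ) = 2*n+1 := by have := x.isLt; omega
    have : ((x+1 : Fin (2*n+2)) : ℕ) = 0 := by
      simp [Fin.add_def, hx]
    omega

private lemma swap_parity {n : ℕ} (a b : Fin (2*n+2)) (h : (a:ℕ) % 2 = (b:ℕ) % 2)
    (x : Fin (2*n+2)) : ((Equiv.swap a b x : Fin (2*n+2)) : ℕ) % 2 = (x:ℕ) % 2 := by
  rw [Equiv.swap_apply_def]
  split_ifs with h1 h2 <;> simp_all

private lemma sG (n : ℕ) (hn : 1 ≤ n) : s9 n hn ∈ G9 n hn :=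
  Subgroup.subset_closure (Set.mem_insert _ _)

private lemma rG (n : ℕ) (hn : 1 ≤ n) : finRotate (2*n+2) ∈ G9 n hn :=
  Subgroup.subset_closure (Set.mem_insert_of_mem _ rfl)

open Fin.NatCast in
/-- all adjacent same-parity swaps `(k, k+2)` lie in `G9`. -/
private lemma adj_swap_mem (n : ℕ) (hn : 1 ≤ n) (k : Fin (2*n+2)) :
    Equiv.swap k ((⟨2, p2 n hn⟩ : Fin (2*n+2)) + k) ∈ G9 n hn := by
  have f := (finRotate (2*n+2))^(k:ℕ)
  have h0 : ((finRotate (2*n+2))^(k:ℕ)) ⟨0, by omega⟩ = k := by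
    rw [rot_pow]
    apply Fin.ext
    simp [Fin.add_def, Fin.val_cast_of_lt k.isLt, Nat.mod_eq_of_lt k.isLt]
  have h2 : ((finRotate (2*n+2))^(k:ℕ)) ⟨2, by omega⟩ = (⟨2, by omega⟩ : Fin (2*n+2)) + k := by
    rw [rot_pow]
    congr 1
    apply Fin.ext
    simp [Fin.val_cast_of_lt k.isLt]
  have := Equiv.swap_apply_apply ((finRotate (2*n+2))^(k:ℕ)) (⟨0, by omega⟩ : Fin (2*n+2)) ⟨2, by omega⟩
  rw [h0, h2] at this
  rw [this]
  exact Subgroup.mul_mem _ (Subgroup.mul_mem _ (Subgroup.pow_mem _ (rG n hn) _) (sG n hn))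
    (Subgroup.inv_mem _ (Subgroup.pow_mem _ (rG n hn) _))

private lemma chain_swap_mem (n : ℕ) (hn : 1 ≤ n) :
    ∀ m : ℕ, (hm : m ≤ n) →
      Equiv.swap (⟨0, p0 n⟩ : Fin (2*n+2)) ⟨2*m, by omega⟩ ∈ G9 n hn := by
  intro m
  induction m with
  | zero =>
    intro _
    have : (⟨0, by omega⟩ : Fin (2*n+2)) = ⟨2*0, by omega⟩ := rfl
    rw [← this, Equiv.swap_self]
    exact Subgroup.one_mem _
  | succ m ih =>
    intro hm
    rcases Nat.eq_zero_or_pos m with rfl | hmpos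
    · exact sG n hn
    · have ihm := ih (by omega)
      have hc : Equiv.swap (⟨2*m, by omega⟩ : Fin (2*n+2)) ⟨2*(m+1), by omega⟩ ∈ G9 n hn := by
        have := adj_swap_mem n hn ⟨2*m, by omega⟩
        have he : (⟨2, by omega⟩ : Fin (2*n+2)) + ⟨2*m, by omega⟩ = ⟨2*(m+1), by omega⟩ := by
          apply Fin.ext
          simp [Fin.add_def, Nat.mod_eq_of_lt (by omega : 2 + 2*m < 2*n+2)]
          omega
        rwa [he] at this
      have h0 : Equiv.swap (⟨2*m, by omega⟩ : Fin (2*n+2)) ⟨2*(m+1), by omega⟩ ⟨0, by omega⟩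
          = ⟨0, by omega⟩ := by
        apply Equiv.swap_apply_of_ne_of_ne
        · exact Fin.ne_of_val_ne (show (0:ℕ) ≠ 2*m by omega)
        · exact Fin.ne_of_val_ne (show (0:ℕ) ≠ 2*(m+1) by omega)
      have h1 : Equiv.swap (⟨2*m, by omega⟩ : Fin (2*n+2)) ⟨2*(m+1), by omega⟩ ⟨2*m, by omega⟩
          = ⟨2*(m+1), by omega⟩ := Equiv.swap_apply_left _ _
      have key := Equiv.swap_apply_apply (Equiv.swap (⟨2*m, by omega⟩ : Fin (2*n+2)) ⟨2*(m+1), by omega⟩) (⟨0, by omega⟩ : Fin (2*n+2)) ⟨2*m, by omega⟩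
      simp only [h0, h1] at key
      rw [key]
      exact Subgroup.mul_mem _ (Subgroup.mul_mem _ hc ihm) (Subgroup.inv_mem _ hc)

open Fin.NatCast in
private lemma same_parity_swap_mem (n : ℕ) (hn : 1 ≤ n) (a b : Fin (2*n+2))
    (h : (a:ℕ) % 2 = (b:ℕ) % 2) : Equiv.swap a b ∈ G9 n hn := by
  -- d := b - a has even value
  have hdval : ((b - a : Fin (2*n+2)):ℕ) = (2*n+2 - (a:ℕ) + (b:ℕ)) % (2*n+2) := by
    rw [Fin.sub_def]
  have hdeven : ((b - a : Fin (2*n+2)):ℕ) % 2 = 0 := by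
    rw [hdval, Nat.mod_mod_of_dvd _ (by omega : 2 ∣ 2*n+2)]
    have := a.isLt
    omega
  have hdlt := (b - a : Fin (2*n+2)).isLt
  obtain ⟨m, hm⟩ : ∃ m, ((b - a : Fin (2*n+2)):ℕ) = 2*m := ⟨((b - a : Fin (2*n+2)):ℕ)/2, by omega⟩
  have hmn : m ≤ n := by omega
  have h2m : 2*m < 2*n+2 := by omega
  have hd' : b - a = (⟨2*m, h2m⟩ : Fin (2*n+2)) := Fin.ext hm
  have h0d : Equiv.swap (⟨0, by omega⟩ : Fin (2*n+2)) (b - a) ∈ G9 n hn := by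
    rw [hd']
    exact chain_swap_mem n hn m hmn
  have h0 : ((finRotate (2*n+2))^(a:ℕ)) ⟨0, by omega⟩ = a := by
    rw [rot_pow]
    apply Fin.ext
    simp [Fin.add_def, Fin.val_cast_of_lt a.isLt, Nat.mod_eq_of_lt a.isLt]
  have h1 : ((finRotate (2*n+2))^(a:ℕ)) (b - a) = b := by
    rw [rot_pow, Fin.cast_val_eq_self, sub_add_cancel]
  have key := Equiv.swap_apply_apply ((finRotate (2*n+2))^(a:ℕ)) (⟨0, by omega⟩ : Fin (2*n+2)) (b - a)
  simp only [h0, h1] at key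
  rw [key]
  exact Subgroup.mul_mem _ (Subgroup.mul_mem _ (Subgroup.pow_mem _ (rG n hn) _) h0d)
    (Subgroup.inv_mem _ (Subgroup.pow_mem _ (rG n hn) _))

private lemma parity_preserving_mem (n : ℕ) (hn : 1 ≤ n) (σ : Equiv.Perm (Fin (2*n+2)))
    (hp : ∀ x, ((σ x : Fin (2*n+2)) : ℕ) % 2 = (x:ℕ) % 2) : σ ∈ G9 n hn := by
  have main : ∀ N : ℕ, ∀ σ : Equiv.Perm (Fin (2*n+2)), σ.support.card ≤ N →
      (∀ x, ((σ x : Fin (2*n+2)) : ℕ) % 2 = (x:ℕ) % 2) → σ ∈ G9 n hn := by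
    intro N
    induction N with
    | zero =>
      intro σ hc _
      have : σ.support = ∅ := Finset.card_eq_zero.mp (Nat.le_zero.mp hc)
      rw [Equiv.Perm.support_eq_empty_iff] at this
      rw [this]; exact Subgroup.one_mem _
    | succ N ih =>
      intro σ hc hp
      by_cases hσ : σ = 1
      · rw [hσ]; exact Subgroup.one_mem _
      · obtain ⟨x, hx⟩ : ∃ x, σ x ≠ x := by
          by_contra hall
          push_neg at hall
          exact hσ (Equiv.ext hall)
        have hcard := Equiv.Perm.card_support_swap_mul (f := σ) (x := x) hx
        set τ := Equiv.swap x (σ x) * σ with hτ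
        have hτp : ∀ y, ((τ y : Fin (2*n+2)) : ℕ) % 2 = (y:ℕ) % 2 := by
          intro y
          rw [hτ, Equiv.Perm.mul_apply]
          rw [swap_parity x (σ x) (hp x).symm (σ y)]
          exact hp y
        have hτmem := ih τ (by omega) hτp
        have hswap : Equiv.swap x (σ x) ∈ G9 n hn :=
          same_parity_swap_mem n hn x (σ x) (hp x).symm
        have : σ = Equiv.swap x (σ x) * τ := by
          rw [hτ, ← mul_assoc, Equiv.swap_mul_self, one_mul]
        rw [this]
        exact Subgroup.mul_mem _ hswap hτmem
  exact main σ.support.card σ le_rfl hp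

theorem stmt9 (n : ℕ) (hn : 1 ≤ n)
    (W : Subgroup (Equiv.Perm (Fin (2*n+2))))
    (hW : ∀ σ, σ ∈ W ↔ (⇑σ '' Bo n = Bo n ∨ ⇑σ '' Bo n = Be n)) :
    W = Subgroup.closure
      {Equiv.swap (⟨0, by omega⟩ : Fin (2*n+2)) ⟨2, by omega⟩, finRotate (2*n+2)} := by
  -- general facts about images
  have img_pres : ∀ σ : Equiv.Perm (Fin (2*n+2)),
      (∀ x, ((σ x : Fin (2*n+2)) : ℕ) % 2 = (x:ℕ) % 2) → ⇑σ '' Bo n = Bo n := by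
    intro σ hp
    ext y
    constructor
    · rintro ⟨x, hx, rfl⟩
      simp only [Bo, Set.mem_setOf_eq] at hx ⊢
      rw [hp x]; exact hx
    · intro hy
      refine ⟨σ⁻¹ y, ?_, σ.apply_symm_apply y⟩
      simp only [Bo, Set.mem_setOf_eq] at hy ⊢
      have := hp (σ⁻¹ y)
      rw [show σ (σ⁻¹ y) = y from σ.apply_symm_apply y] at this
      omega
  have img_flip : ∀ σ : Equiv.Perm (Fin (2*n+2)),
      (∀ x, ((σ x : Fin (2*n+2)) : ℕ) % 2 ≠ (x:ℕ) % 2) → ⇑σ '' Bo n = Be n := by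
    intro σ hp
    ext y
    constructor
    · rintro ⟨x, hx, rfl⟩
      simp only [Bo, Be, Set.mem_setOf_eq] at hx ⊢
      have := hp x
      have h2 := Nat.mod_two_eq_zero_or_one ((σ x : Fin (2*n+2)) : ℕ)
      omega
    · intro hy
      refine ⟨σ⁻¹ y, ?_, σ.apply_symm_apply y⟩
      simp only [Bo, Be, Set.mem_setOf_eq] at hy ⊢
      have := hp (σ⁻¹ y)
      rw [show σ (σ⁻¹ y) = y from σ.apply_symm_apply y] at this
      have h2 := Nat.mod_two_eq_zero_or_one ((σ⁻¹ y : Fin (2*n+2)) : ℕ)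
      omega
  show W = G9 n hn
  apply le_antisymm
  · -- W ≤ closure
    intro σ hσ
    rw [hW] at hσ
    rcases hσ with heq | heq
    · -- σ preserves parity pointwise
      apply parity_preserving_mem n hn
      intro x
      rcases Nat.mod_two_eq_zero_or_one (x:ℕ) with hx | hx
      · have hxB : x ∈ Bo n := hx
        have : σ x ∈ Bo n := heq ▸ ⟨x, hxB, rfl⟩
        simp only [Bo, Set.mem_setOf_eq] at this
        omega
      · -- x odd; show σ x odd
        rcases Nat.mod_two_eq_zero_or_one ((σ x : Fin (2*n+2)) : ℕ) with hsx | hsx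
        · exfalso
          have : σ x ∈ Bo n := hsx
          rw [← heq] at this
          obtain ⟨y, hy, hyx⟩ := this
          have : y = x := σ.injective hyx
          subst this
          simp only [Bo, Set.mem_setOf_eq] at hy
          omega
        · omega
    · -- σ flips parity pointwise
      have hflip : ∀ x, ((σ x : Fin (2*n+2)) : ℕ) % 2 ≠ (x:ℕ) % 2 := by
        intro x
        rcases Nat.mod_two_eq_zero_or_one (x:ℕ) with hx | hx
        · have hxB : x ∈ Bo n := hx
          have : σ x ∈ Be n := heq ▸ ⟨x, hxB, rfl⟩
          simp only [Be, Set.mem_setOf_eq] at this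
          omega
        · rcases Nat.mod_two_eq_zero_or_one ((σ x : Fin (2*n+2)) : ℕ) with hsx | hsx
          · omega
          · exfalso
            have : σ x ∈ Be n := hsx
            rw [← heq] at this
            obtain ⟨y, hy, hyx⟩ := this
            have : y = x := σ.injective hyx
            subst this
            simp only [Bo, Set.mem_setOf_eq] at hy
            omega
      set r := finRotate (2*n+2) with hr
      have hτp : ∀ x, (((r⁻¹ * σ) x : Fin (2*n+2)) : ℕ) % 2 = (x:ℕ) % 2 := by
        intro x
        have h1 := rot_parity n (r⁻¹ (σ x))
        rw [show r (r⁻¹ (σ x)) = σ x from r.apply_symm_apply _] at h1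
        have h2 := hflip x
        have := Nat.mod_two_eq_zero_or_one ((σ x : Fin (2*n+2)) : ℕ)
        have := Nat.mod_two_eq_zero_or_one ((r⁻¹ (σ x) : Fin (2*n+2)) : ℕ)
        have := Nat.mod_two_eq_zero_or_one ((x : Fin (2*n+2)) : ℕ)
        simp only [Equiv.Perm.mul_apply]
        omega
      have hτ := parity_preserving_mem n hn (r⁻¹ * σ) hτp
      have : σ = r * (r⁻¹ * σ) := by rw [← mul_assoc, mul_inv_cancel, one_mul]
      rw [this]
      exact Subgroup.mul_mem _ (rG n hn) hτ
  · -- closure ≤ W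
    rw [Subgroup.closure_le]
    rintro σ (rfl | rfl)
    · rw [SetLike.mem_coe, hW]
      left
      apply img_pres
      intro x
      exact swap_parity _ _ (by norm_num) x
    · rw [SetLike.mem_coe, hW]
      right
      apply img_flip
      intro x
      exact rot_parity n x
end
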